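/- arXiv:1812.00966 — 4 statements merged into one kernel-verified Lean document; each statement's English description precedes it below -/
import Mathlib

section
/- Let 0 ≤ p < 1, ν ∈ ℕ with ν ≥ 1, and M ∈ ℕ with M ≥ 1, and let T be a random variable with values in ℕ ∪ {∞} such that for every t ∈ ℕ, P(T > t + M) ≤ (1 − (1/2)·(1−p)^{νM})·P(T > t). Then E[T] ≤ 2M·(1−p)^{−νM} ≤ 2M·e^{νpM/(1−p)}. -/
open MeasureTheory

/-- **Theorem (expected optimisation time under prior noise with `ν` evaluations
per iteration).**
Let `0 ≤ p < 1`, `ν ≥ 1` and `M ≥ 1`, and let `T` be a random variable with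
values in `ℕ ∪ {∞}` such that for every `t`,
`P(T > t + M) ≤ (1 − (1/2)·(1−p)^{νM}) · P(T > t)`
(a phase of `M` noise-free iterations, each evaluating up to `ν` search
points, succeeds with probability at least `(1/2)·(1−p)^{νM}`). Then the
expectation `E[T] = Σ_{t∈ℕ} P(T > t)` satisfies
`E[T] ≤ 2M·(1−p)^{−νM} ≤ 2M·e^{νpM/(1−p)}`. -/
theorem expected_time_under_noise_nu_evaluations
    {Ω : Type*} [MeasurableSpace Ω] (μ : Measure Ω) [IsProbabilityMeasure μ]
    (T : Ω → ℕ∞) (p : ℝ) (ν M : ℕ)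
    (hp0 : 0 ≤ p) (hp1 : p < 1) (hν : 1 ≤ ν) (hM : 1 ≤ M)
    (hstep : ∀ t : ℕ,
      μ {ω | ((t + M : ℕ) : ℕ∞) < T ω}
        ≤ ENNReal.ofReal (1 - 1 / 2 * (1 - p) ^ (ν * M)) * μ {ω | ((t : ℕ) : ℕ∞) < T ω}) :
    (∑' t : ℕ, μ {ω | ((t : ℕ) : ℕ∞) < T ω})
        ≤ ENNReal.ofReal (2 * M * ((1 - p) ^ (ν * M))⁻¹)
      ∧ ENNReal.ofReal (2 * M * ((1 - p) ^ (ν * M))⁻¹)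
        ≤ ENNReal.ofReal (2 * M * Real.exp (ν * p * M / (1 - p))) := by
  haveI : NeZero M := ⟨by omega⟩
  set q : ℝ := (1 - p) ^ (ν * M) with hq
  have hq0 : 0 < q := pow_pos (by linarith) _
  have hq1 : q ≤ 1 := pow_le_one₀ (by linarith) (by linarith)
  set c : ℝ := 1 - 1 / 2 * q with hc
  have hc0 : 0 ≤ c := by simp only [hc]; linarith
  have hc1 : c < 1 := by simp only [hc]; linarith
  have key : ∀ k : ℕ, μ {ω | ((k * M : ℕ) : ℕ∞) < T ω} ≤ ENNReal.ofReal c ^ k := by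
    intro k
    induction k with
    | zero => simpa using prob_le_one
    | succ k ih =>
        have h1 : (k + 1) * M = k * M + M := by ring
        calc μ {ω | (((k + 1) * M : ℕ) : ℕ∞) < T ω}
            = μ {ω | ((k * M + M : ℕ) : ℕ∞) < T ω} := by rw [h1]
          _ ≤ ENNReal.ofReal c * μ {ω | ((k * M : ℕ) : ℕ∞) < T ω} := hstep _
          _ ≤ ENNReal.ofReal c * ENNReal.ofReal c ^ k :=
              mul_le_mul_right ih _
          _ = ENNReal.ofReal c ^ (k + 1) := (pow_succ' _ _).symm
  have mono : ∀ t : ℕ, μ {ω | ((t : ℕ) : ℕ∞) < T ω} ≤ ENNReal.ofReal c ^ (t / M) := by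
    intro t
    refine le_trans ?_ (key (t / M))
    apply measure_mono
    intro ω hω
    have h : (t / M) * M ≤ t := Nat.div_mul_le_self t M
    exact lt_of_le_of_lt ((Nat.cast_le (α := ℕ∞)).mpr h) hω
  have hsum : (∑' t : ℕ, μ {ω | ((t : ℕ) : ℕ∞) < T ω})
      ≤ ENNReal.ofReal (2 * M * q⁻¹) := by
    calc (∑' t : ℕ, μ {ω | ((t : ℕ) : ℕ∞) < T ω})
        ≤ ∑' t : ℕ, ENNReal.ofReal c ^ (t / M) := ENNReal.tsum_le_tsum mono
      _ = ∑' x : ℕ × Fin M, ENNReal.ofReal c ^ x.1 := by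
          rw [← Equiv.tsum_eq (Nat.divModEquiv M) (fun x : ℕ × Fin M => ENNReal.ofReal c ^ x.1)]
          simp [Nat.divModEquiv]
      _ = ∑' k : ℕ, ∑' _r : Fin M, ENNReal.ofReal c ^ k :=
          ENNReal.tsum_prod (f := fun k (_ : Fin M) => ENNReal.ofReal c ^ k)
      _ = ∑' k : ℕ, (M : ENNReal) * ENNReal.ofReal c ^ k := by
          congr 1; funext k
          simp [tsum_fintype, Finset.sum_const, nsmul_eq_mul]
      _ = (M : ENNReal) * ∑' k : ℕ, ENNReal.ofReal c ^ k := ENNReal.tsum_mul_left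
      _ = (M : ENNReal) * (1 - ENNReal.ofReal c)⁻¹ := by rw [ENNReal.tsum_geometric]
      _ = ENNReal.ofReal (2 * M * q⁻¹) := by
          have h1 : (1 : ENNReal) - ENNReal.ofReal c = ENNReal.ofReal (1 - c) := by
            rw [ENNReal.ofReal_sub 1 hc0, ENNReal.ofReal_one]
          have h2 : (1 : ℝ) - c = q / 2 := by simp only [hc]; ring
          rw [h1, h2, ← ENNReal.ofReal_inv_of_pos (by linarith), ← ENNReal.ofReal_natCast M,
            ← ENNReal.ofReal_mul (by positivity)]
          congr 1
          field_simp
  refine ⟨hsum, ?_⟩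
  apply ENNReal.ofReal_le_ofReal
  apply mul_le_mul_of_nonneg_left _ (by positivity : (0:ℝ) ≤ 2 * M)
  have h1 : (1 - p)⁻¹ ≤ Real.exp (p / (1 - p)) := by
    have := Real.add_one_le_exp (p / (1 - p))
    have hne : (1:ℝ) - p ≠ 0 := by linarith
    have h : p / (1 - p) + 1 = (1 - p)⁻¹ := by field_simp; ring
    linarith
  calc q⁻¹ = ((1 - p)⁻¹) ^ (ν * M) := by rw [hq, inv_pow]
    _ ≤ Real.exp (p / (1 - p)) ^ (ν * M) :=
        pow_le_pow_left₀ (inv_nonneg.mpr (by linarith)) h1 _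
    _ = Real.exp (↑(ν * M) * (p / (1 - p))) := by rw [← Real.exp_nat_mul]
    _ = Real.exp (ν * p * M / (1 - p)) := by
        congr 1; push_cast; ring
end

section
/- There exist constants C, c > 0 such that for every n ≥ 1 and every real p with 0 ≤ p ≤ 1/2, the expected optimisation time of the (1+1) EA with one-bit prior noise probability p on LeadingOnes is at most C·n²·e^{c·p·n²}. -/
open Finset ENNReal

/-- A search point: a bit string of length `n`. -/
abbrev Point (n : ℕ) := Fin n → Bool

/-- The LeadingOnes fitness: the length of the longest all-ones prefix. -/
def LO {n : ℕ} (x : Point n) : ℕ :=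
  (Finset.univ.filter fun i : Fin n => ∀ j : Fin n, j ≤ i → x j = true).card

/-- The all-ones string, the unique global optimum of LeadingOnes. -/
def allOnes (n : ℕ) : Point n := fun _ => true

/-- Probability that standard bit mutation (flip each bit independently with
probability `1/n`) turns `x` into `y`. -/
noncomputable def mutProb (n : ℕ) (x y : Point n) : ℝ :=
  (1 / n) ^ hammingDist x y * (1 - 1 / n) ^ (n - hammingDist x y)

/-- Probability that one-bit prior noise with probability `p` turns `x` into `u`:
with probability `1 - p` no noise occurs, otherwise one uniformly random bit flips. -/
noncomputable def oneBitNoise (n : ℕ) (p : ℝ) (x u : Point n) : ℝ :=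
  (if u = x then 1 - p else 0) + (if hammingDist x u = 1 then p / n else 0)

/-- Probability that offspring `y` is accepted against parent `x`, i.e. that the
noisy fitness of `y` is at least the noisy fitness of `x` (noise applied
independently to parent and offspring). -/
noncomputable def accProb (n : ℕ) (noise : Point n → Point n → ℝ)
    (f : Point n → ℝ) (x y : Point n) : ℝ :=
  ∑ u : Point n, ∑ v : Point n,
    noise x u * noise y v * (if f u ≤ f v then 1 else 0)

/-- One-generation transition probability of a (1+1)-type algorithm with mutation
kernel `mutK`, prior-noise kernel `noise` and fitness `f`: mutation creates an
offspring, which replaces the parent iff its noisy fitness is at least the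
parent's noisy fitness. -/
noncomputable def step (n : ℕ) (mutK noise : Point n → Point n → ℝ)
    (f : Point n → ℝ) (x z : Point n) : ℝ :=
  mutK x z * accProb n noise f x z
    + (if z = x then ∑ y : Point n, mutK x y * (1 - accProb n noise f x y) else 0)

/-- One-generation transition probability of the (1+1) EA with one-bit prior
noise probability `p` on LeadingOnes. -/
noncomputable def stepEA (n : ℕ) (p : ℝ) : Point n → Point n → ℝ :=
  step n (mutProb n) (oneBitNoise n p) fun x => (LO x : ℝ)

/-- Probability that a Markov chain with transition matrix `P` started in `x`
does not visit `opt` within the first `t` generations (time `0` included). -/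
noncomputable def survive (n : ℕ) (P : Point n → Point n → ℝ) (opt : Point n) :
    ℕ → Point n → ℝ
  | 0, x => if x = opt then 0 else 1
  | t + 1, x => if x = opt then 0 else ∑ y : Point n, P x y * survive n P opt t y

/-- Expected optimisation time, measured in fitness evaluations
(`evalsPerGen` evaluations per generation), of a Markov chain with transition
matrix `P` started from a uniformly random search point, until it first hits
`opt`; computed as `evalsPerGen · Σ_t P(T > t)`. -/
noncomputable def expectedTime (n : ℕ) (P : Point n → Point n → ℝ)
    (opt : Point n) (evalsPerGen : ℕ) : ℝ≥0∞ :=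
  (evalsPerGen : ℝ≥0∞) * ∑' t : ℕ, ENNReal.ofReal
    ((Fintype.card (Point n) : ℝ)⁻¹ * ∑ x : Point n, survive n P opt t x)

/-- Expected optimisation time (number of fitness evaluations, two per
generation) of the (1+1) EA with one-bit prior noise probability `p` on
LeadingOnes with problem size `n`, from a uniformly random initial search point. -/
noncomputable def EAtime (n : ℕ) (p : ℝ) : ℝ≥0∞ :=
  expectedTime n (stepEA n p) (allOnes n) 2

/-- Bijection between points and subsets (of flipped coordinates relative to x). -/
def flipEquiv (n : ℕ) (x : Point n) : Point n ≃ Finset (Fin n) where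
  toFun y := Finset.univ.filter fun i => x i ≠ y i
  invFun s := fun i => if i ∈ s then !x i else x i
  left_inv y := by
    funext i
    by_cases h : x i = y i <;> simp [h]
    · cases hx : x i <;> cases hy : y i <;> simp_all
  right_inv s := by
    ext i
    by_cases h : i ∈ s <;> simp [h]

lemma hd_card (n : ℕ) (x y : Point n) :
    hammingDist x y = (flipEquiv n x y).card := by
  simp [hammingDist, flipEquiv]

lemma sum_over_points (n : ℕ) (x : Point n) (F : ℕ → ℝ) :
    ∑ y : Point n, F (hammingDist x y)
      = ∑ k ∈ Finset.range (n+1), (n.choose k : ℝ) * F k := by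
  have h1 : ∑ y : Point n, F (hammingDist x y)
      = ∑ s : Finset (Fin n), F s.card := by
    rw [← Equiv.sum_comp (flipEquiv n x) (fun s => F s.card)]
    simp_rw [← hd_card]
  rw [h1]
  have h2 : (Finset.univ : Finset (Finset (Fin n)))
      = (Finset.univ : Finset (Fin n)).powerset := by
    rw [Finset.powerset_univ]
  rw [h2, Finset.sum_powerset_apply_card]
  rw [Finset.card_univ, Fintype.card_fin]
  refine Finset.sum_congr rfl fun k _ => ?_
  rw [nsmul_eq_mul]

lemma mut_sum (n : ℕ) (hn : 1 ≤ n) (x : Point n) :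
    ∑ y : Point n, mutProb n x y = 1 := by
  have := sum_over_points n x (fun k => (1 / n : ℝ) ^ k * (1 - 1 / n) ^ (n - k))
  simp only [mutProb]
  rw [this]
  have hb := add_pow (1 / n : ℝ) (1 - 1 / n) n
  have : ((1:ℝ) / n + (1 - 1 / n)) = 1 := by ring
  rw [this, one_pow] at hb
  rw [Finset.sum_congr rfl (fun k _ => by ring :
    ∀ k ∈ Finset.range (n+1), (n.choose k : ℝ) * ((1 / n) ^ k * (1 - 1 / n) ^ (n - k))
      = (1 / n) ^ k * (1 - 1 / n) ^ (n - k) * (n.choose k))]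
  exact hb.symm

lemma mut_nonneg (n : ℕ) (hn : 1 ≤ n) (x y : Point n) : 0 ≤ mutProb n x y := by
  have h1 : (0:ℝ) ≤ 1/n := by positivity
  have h2 : (0:ℝ) ≤ 1 - 1/n := by
    have : (1:ℝ) ≤ n := by exact_mod_cast hn
    have : (1:ℝ)/n ≤ 1 := by
      rw [div_le_one (by linarith)]; linarith
    linarith
  exact mul_nonneg (pow_nonneg h1 _) (pow_nonneg h2 _)

lemma noise_sum (n : ℕ) (hn : 1 ≤ n) (p : ℝ) (x : Point n) :
    ∑ u : Point n, oneBitNoise n p x u = 1 := by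
  unfold oneBitNoise
  rw [Finset.sum_add_distrib]
  have h1 : ∑ u : Point n, (if u = x then (1 - p : ℝ) else 0) = 1 - p := by
    simp
  have h2 : ∑ u : Point n, (if hammingDist x u = 1 then (p / n : ℝ) else 0) = p := by
    have := sum_over_points n x (fun k => if k = 1 then (p / n : ℝ) else 0)
    rw [this, Finset.sum_eq_single 1]
    · rw [if_pos rfl, Nat.choose_one_right]
      field_simp
    · intro k _ hk; rw [if_neg hk, mul_zero]
    · intro h; exact absurd (Finset.mem_range.2 (by omega)) h
  rw [h1, h2]; ring

lemma noise_nonneg (n : ℕ) (p : ℝ) (hp0 : 0 ≤ p) (hp1 : p ≤ 1) (x u : Point n) :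
    0 ≤ oneBitNoise n p x u := by
  unfold oneBitNoise
  have : (0:ℝ) ≤ p / n := by positivity
  split_ifs <;> linarith

lemma noise_self (n : ℕ) (p : ℝ) (x : Point n) : oneBitNoise n p x x = 1 - p := by
  simp [oneBitNoise]

lemma LO_le (n : ℕ) (x : Point n) : LO x ≤ n := by
  have := Finset.card_filter_le (Finset.univ : Finset (Fin n))
    (fun i => ∀ j : Fin n, j ≤ i → x j = true)
  simpa [LO] using this

lemma exists_false_of_ne (n : ℕ) (x : Point n) (hx : x ≠ allOnes n) :
    ∃ i, x i = false := by
  by_contra h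
  push_neg at h
  exact hx (funext fun i => by
    have := h i
    simp [allOnes]
    cases hxi : x i
    · exact absurd hxi (h i)
    · rfl)

/-- If `k` is the first zero of `x`, then `LO x = k`. -/
lemma LO_eq_first (n : ℕ) (x : Point n) (k : Fin n)
    (h1 : x k = false) (h2 : ∀ j, j < k → x j = true) : LO x = k.val := by
  have hset : (Finset.univ.filter fun i : Fin n => ∀ j : Fin n, j ≤ i → x j = true)
      = Finset.Iio k := by
    ext i
    simp only [Finset.mem_filter, Finset.mem_univ, true_and, Finset.mem_Iio]
    constructor
    · intro h
      by_contra hik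
      push_neg at hik
      have := h k hik
      rw [h1] at this; exact Bool.false_ne_true this
    · intro hik j hji
      exact h2 j (lt_of_le_of_lt hji hik)
  rw [LO, hset, Fin.card_Iio]

lemma firstZero_spec (n : ℕ) (x : Point n) (hx : x ≠ allOnes n) :
    ∃ k : Fin n, x k = false ∧ (∀ j, j < k → x j = true) ∧ LO x = k.val := by
  classical
  have hne : (Finset.univ.filter fun i => x i = false).Nonempty := by
    obtain ⟨i, hi⟩ := exists_false_of_ne n x hx
    exact ⟨i, by simp [hi]⟩
  set k := (Finset.univ.filter fun i => x i = false).min' hne with hk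
  have hk1 : x k = false := by
    have := Finset.min'_mem _ hne
    simpa using this
  have hk2 : ∀ j, j < k → x j = true := by
    intro j hj
    by_contra hj'
    have hjf : x j = false := by
      cases hxj : x j
      · rfl
      · exact absurd hxj hj'
    have : k ≤ j := Finset.min'_le _ _ (by simp [hjf])
    exact absurd hj (not_lt.2 this)
  exact ⟨k, hk1, hk2, LO_eq_first n x k hk1 hk2⟩

lemma LO_lt_of_ne (n : ℕ) (x : Point n) (hx : x ≠ allOnes n) : LO x < n := by
  obtain ⟨k, _, _, hLO⟩ := firstZero_spec n x hx
  rw [hLO]; exact k.2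

lemma upd_ne (n : ℕ) (x : Point n) (k : Fin n) (h1 : x k = false) :
    Function.update x k true ≠ x := by
  intro h
  have := congrFun h k
  rw [Function.update_self, h1] at this
  simp at this

lemma hd_upd (n : ℕ) (x : Point n) (k : Fin n) (h1 : x k = false) :
    hammingDist x (Function.update x k true) = 1 := by
  have hset : (Finset.univ.filter fun i => x i ≠ Function.update x k true i) = {k} := by
    ext i
    simp only [Finset.mem_filter, Finset.mem_univ, true_and, Finset.mem_singleton]
    constructor
    · intro h
      by_contra hik
      rw [Function.update_of_ne hik] at h
      exact h rfl
    · intro h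
      subst h
      rw [Function.update_self, h1]
      simp
  rw [show hammingDist x (Function.update x k true)
      = (Finset.univ.filter fun i => x i ≠ Function.update x k true i).card from rfl,
    hset, Finset.card_singleton]

lemma LO_upd (n : ℕ) (x : Point n) (k : Fin n)
    (h1 : x k = false) (h2 : ∀ j, j < k → x j = true) :
    LO x + 1 ≤ LO (Function.update x k true) := by
  set y := Function.update x k true with hy
  have hLOx : LO x = k.val := LO_eq_first n x k h1 h2
  by_cases hyall : y = allOnes n
  · rw [hyall]
    have : LO (allOnes n) = n := by
      rw [LO]
      have : (Finset.univ.filter fun i : Fin n => ∀ j : Fin n, j ≤ i → allOnes n j = true)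
          = Finset.univ := by
        ext i; simp [allOnes]
      rw [this, Finset.card_univ, Fintype.card_fin]
    rw [this, hLOx]
    exact k.2
  · obtain ⟨k', hk1, hk2, hLOy⟩ := firstZero_spec n y hyall
    rw [hLOy, hLOx]
    have hkk' : k < k' := by
      rcases lt_trichotomy k k' with h | h | h
      · exact h
      · exfalso; subst h
        rw [hy, Function.update_self] at hk1
        simp [hy] at hk1
      · exfalso
        have hxk' : x k' = true := h2 k' h
        have hne : k' ≠ k := (ne_of_lt h)
        have : y k' = x k' := Function.update_of_ne hne _ _
        rw [this, hxk'] at hk1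
        simp at hk1
    omega

lemma acc_nonneg (n : ℕ) (p : ℝ) (hp0 : 0 ≤ p) (hp1 : p ≤ 1) (f : Point n → ℝ)
    (x y : Point n) : 0 ≤ accProb n (oneBitNoise n p) f x y := by
  apply Finset.sum_nonneg; intro u _
  apply Finset.sum_nonneg; intro v _
  have := noise_nonneg n p hp0 hp1 x u
  have := noise_nonneg n p hp0 hp1 y v
  positivity

lemma acc_le_one (n : ℕ) (hn : 1 ≤ n) (p : ℝ) (hp0 : 0 ≤ p) (hp1 : p ≤ 1)
    (f : Point n → ℝ) (x y : Point n) : accProb n (oneBitNoise n p) f x y ≤ 1 := by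
  have h : accProb n (oneBitNoise n p) f x y
      ≤ ∑ u : Point n, ∑ v : Point n, oneBitNoise n p x u * oneBitNoise n p y v := by
    apply Finset.sum_le_sum; intro u _
    apply Finset.sum_le_sum; intro v _
    have h1 := noise_nonneg n p hp0 hp1 x u
    have h2 := noise_nonneg n p hp0 hp1 y v
    have hind : (if f u ≤ f v then (1:ℝ) else 0) ≤ 1 := by split_ifs <;> norm_num
    exact mul_le_of_le_one_right (by positivity) hind
  calc accProb n (oneBitNoise n p) f x y ≤ _ := h
    _ = 1 := by
        rw [← Finset.sum_mul_sum]
        rw [noise_sum n hn p x, noise_sum n hn p y]; ring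

lemma acc_ge (n : ℕ) (p : ℝ) (hp0 : 0 ≤ p) (hp1 : p ≤ 1)
    (f : Point n → ℝ) (x y : Point n) (hf : f x ≤ f y) :
    (1 - p) ^ 2 ≤ accProb n (oneBitNoise n p) f x y := by
  have key : (1 - p) * (1 - p) ≤ accProb n (oneBitNoise n p) f x y := by
    unfold accProb
    have hterm : ∀ u : Point n, 0 ≤ ∑ v : Point n,
        oneBitNoise n p x u * oneBitNoise n p y v * (if f u ≤ f v then (1:ℝ) else 0) := by
      intro u
      apply Finset.sum_nonneg; intro v _
      have := noise_nonneg n p hp0 hp1 x u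
      have := noise_nonneg n p hp0 hp1 y v
      positivity
    calc (1 - p) * (1 - p)
        = oneBitNoise n p x x * oneBitNoise n p y y * (if f x ≤ f y then (1:ℝ) else 0) := by
          rw [noise_self, noise_self, if_pos hf]; ring
      _ ≤ ∑ v : Point n,
          oneBitNoise n p x x * oneBitNoise n p y v * (if f x ≤ f v then (1:ℝ) else 0) := by
          apply Finset.single_le_sum (f := fun v => oneBitNoise n p x x * oneBitNoise n p y v
            * (if f x ≤ f v then (1:ℝ) else 0)) ?_ (Finset.mem_univ y)
          intro v _
          have := noise_nonneg n p hp0 hp1 x x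
          have := noise_nonneg n p hp0 hp1 y v
          positivity
      _ ≤ _ := Finset.single_le_sum (f := fun u => ∑ v : Point n,
            oneBitNoise n p x u * oneBitNoise n p y v * (if f u ≤ f v then (1:ℝ) else 0))
            (fun u _ => hterm u) (Finset.mem_univ x)
  nlinarith [key]

lemma acc_le_fall (n : ℕ) (hn : 1 ≤ n) (p : ℝ) (hp0 : 0 ≤ p) (hp1 : p ≤ 1)
    (f : Point n → ℝ) (x y : Point n) (hf : f y < f x) :
    accProb n (oneBitNoise n p) f x y ≤ 2 * p := by
  set a := oneBitNoise n p x with ha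
  set b := oneBitNoise n p y with hb
  have h : accProb n (oneBitNoise n p) f x y
      ≤ ∑ u : Point n, ∑ v : Point n, a u * b v * (if u = x ∧ v = y then 0 else 1) := by
    apply Finset.sum_le_sum; intro u _
    apply Finset.sum_le_sum; intro v _
    have h1 := noise_nonneg n p hp0 hp1 x u
    have h2 := noise_nonneg n p hp0 hp1 y v
    rw [← ha] at h1; rw [← hb] at h2
    by_cases huv : u = x ∧ v = y
    · rw [if_pos huv, huv.1, huv.2, if_neg (not_le.2 hf)]
    · rw [if_neg huv]
      have hind : (if f u ≤ f v then (1:ℝ) else 0) ≤ 1 := by split_ifs <;> norm_num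
      exact mul_le_mul_of_nonneg_left hind (by positivity)
  have inner : ∀ u : Point n, ∑ v : Point n, a u * b v * (if u = x ∧ v = y then (0:ℝ) else 1)
      = a u - (if u = x then a x * b y else 0) := by
    intro u
    by_cases hu : u = x
    · have : ∀ v : Point n, a u * b v * (if u = x ∧ v = y then (0:ℝ) else 1)
          = a u * b v - (if v = y then a u * b y else 0) := by
        intro v
        by_cases hv : v = y
        · rw [if_pos ⟨hu, hv⟩, if_pos hv, hv]; ring
        · rw [if_neg (fun hc => hv hc.2), if_neg hv]; ring
      rw [Finset.sum_congr rfl (fun v _ => this v), Finset.sum_sub_distrib,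
        ← Finset.mul_sum, noise_sum n hn p y, Finset.sum_ite_eq' Finset.univ y
          (fun _ => a u * b y)]
      simp [hu]
    · have : ∀ v : Point n, a u * b v * (if u = x ∧ v = y then (0:ℝ) else 1) = a u * b v := by
        intro v
        rw [if_neg (fun hc => hu hc.1), mul_one]
      rw [Finset.sum_congr rfl (fun v _ => this v), ← Finset.mul_sum, noise_sum n hn p y,
        if_neg hu, mul_one, sub_zero]
  have h2 : ∑ u : Point n, ∑ v : Point n, a u * b v * (if u = x ∧ v = y then (0:ℝ) else 1)
      = 1 - a x * b y := by
    rw [Finset.sum_congr rfl (fun u _ => inner u), Finset.sum_sub_distrib,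
      noise_sum n hn p x, Finset.sum_ite_eq' Finset.univ x (fun _ => a x * b y)]
    simp
  have h3 : a x * b y = (1 - p) * (1 - p) := by
    rw [ha, hb, noise_self, noise_self]
  nlinarith [h, h2, h3]

section step
variable (n : ℕ) (p : ℝ)

lemma step_nonneg (hn : 1 ≤ n) (hp0 : 0 ≤ p) (hp1 : p ≤ 1) (x z : Point n) : 0 ≤ stepEA n p x z := by
  unfold stepEA step
  have h1 := mut_nonneg n hn x z
  have h2 := acc_nonneg n p hp0 hp1 (fun x => (LO x : ℝ)) x z
  have h3 : (0:ℝ) ≤ if z = x then ∑ y : Point n, mutProb n x y *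
      (1 - accProb n (oneBitNoise n p) (fun x => (LO x : ℝ)) x y) else 0 := by
    split_ifs
    · apply Finset.sum_nonneg; intro y _
      have := mut_nonneg n hn x y
      have := acc_le_one n hn p hp0 hp1 (fun x => (LO x : ℝ)) x y
      nlinarith
    · exact le_refl _
  have := mul_nonneg h1 h2
  linarith

lemma step_sum (hn : 1 ≤ n) (x : Point n) : ∑ z : Point n, stepEA n p x z = 1 := by
  unfold stepEA step
  rw [Finset.sum_add_distrib]
  rw [Finset.sum_ite_eq' Finset.univ x]
  rw [if_pos (Finset.mem_univ x)]
  rw [← Finset.sum_add_distrib]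
  have : ∀ y : Point n, mutProb n x y * accProb n (oneBitNoise n p) (fun x => (LO x : ℝ)) x y
      + mutProb n x y * (1 - accProb n (oneBitNoise n p) (fun x => (LO x : ℝ)) x y)
      = mutProb n x y := by intro y; ring
  rw [Finset.sum_congr rfl (fun y _ => this y), mut_sum n hn x]

/-- Improvement: probability of stepping to the point with first zero flipped. -/
lemma step_improve (hn : 1 ≤ n) (hp0 : 0 ≤ p) (hp1 : p ≤ 1) (x : Point n) (k : Fin n)
    (h1 : x k = false) (h2 : ∀ j, j < k → x j = true) :
    (1 / n) * (1 - 1/n) ^ (n-1) * (1-p)^2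
      ≤ stepEA n p x (Function.update x k true) := by
  set z := Function.update x k true with hz
  have hne : z ≠ x := upd_ne n x k h1
  have hd : hammingDist x z = 1 := hd_upd n x k h1
  have hmut : mutProb n x z = (1 / n) * (1 - 1/n) ^ (n-1) := by
    rw [mutProb, hd, pow_one]
  have hLO : ((LO x : ℝ)) ≤ ((LO z : ℝ)) := by
    have h := LO_upd n x k h1 h2
    rw [← hz] at h
    exact_mod_cast Nat.le_of_lt (by omega)
  have hacc := acc_ge n p hp0 hp1 (fun x => (LO x : ℝ)) x z hLO
  unfold stepEA step
  rw [if_neg hne, add_zero, hmut]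
  have hm : (0:ℝ) ≤ (1 / n) * (1 - 1/n) ^ (n-1) := by
    rw [← hmut]; exact mut_nonneg n hn x z
  calc (1 / n) * (1 - 1/n) ^ (n-1) * (1-p)^2
      ≤ (1 / n) * (1 - 1/n) ^ (n-1) * accProb n (oneBitNoise n p) (fun x => (LO x : ℝ)) x z :=
        mul_le_mul_of_nonneg_left hacc hm
    _ = _ := rfl

/-- Total probability of falling to a strictly lower LO value is at most 2p. -/
lemma step_fall (hn : 1 ≤ n) (hp0 : 0 ≤ p) (hp1 : p ≤ 1) (x : Point n) :
    ∑ y ∈ Finset.univ.filter (fun y : Point n => LO y < LO x), stepEA n p x y ≤ 2 * p := by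
  have hterm : ∀ y ∈ Finset.univ.filter (fun y : Point n => LO y < LO x),
      stepEA n p x y ≤ mutProb n x y * (2 * p) := by
    intro y hy
    rw [Finset.mem_filter] at hy
    have hyx : y ≠ x := by
      intro h; rw [h] at hy; exact lt_irrefl _ hy.2
    have hLO : ((LO y : ℝ)) < ((LO x : ℝ)) := by exact_mod_cast hy.2
    have hacc := acc_le_fall n hn p hp0 hp1 (fun x => (LO x : ℝ)) x y hLO
    unfold stepEA step
    rw [if_neg hyx, add_zero]
    exact mul_le_mul_of_nonneg_left hacc (mut_nonneg n hn x y)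
  calc ∑ y ∈ Finset.univ.filter (fun y : Point n => LO y < LO x), stepEA n p x y
      ≤ ∑ y ∈ Finset.univ.filter (fun y : Point n => LO y < LO x), mutProb n x y * (2 * p) :=
        Finset.sum_le_sum hterm
    _ = (∑ y ∈ Finset.univ.filter (fun y : Point n => LO y < LO x), mutProb n x y) * (2 * p) :=
        (Finset.sum_mul _ _ _).symm
    _ ≤ 1 * (2 * p) := by
        apply mul_le_mul_of_nonneg_right _ (by linarith)
        rw [← mut_sum n hn x]
        exact Finset.sum_le_sum_of_subset_of_nonneg (Finset.filter_subset _ _)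
          (fun y _ _ => mut_nonneg n hn x y)
    _ = 2 * p := one_mul _

end step

/-- Potential scale: `Sf n p ℓ` is the drift potential difference. -/
noncomputable def Sf (n : ℕ) (p : ℝ) : ℕ → ℝ
  | 0 => 0
  | (l+1) => Sf n p l + 4 * Real.exp 1 * n * (1 + 2 * p * Sf n p l)

lemma Sf_nonneg (n : ℕ) (p : ℝ) (hp0 : 0 ≤ p) : ∀ l, 0 ≤ Sf n p l := by
  intro l
  induction l with
  | zero => simp [Sf]
  | succ l ih =>
    have he : (0:ℝ) < Real.exp 1 := Real.exp_pos 1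
    have hn0 : (0:ℝ) ≤ n := Nat.cast_nonneg n
    have : (0:ℝ) ≤ 4 * Real.exp 1 * n * (1 + 2 * p * Sf n p l) := by positivity
    rw [Sf]; linarith

lemma Sf_mono (n : ℕ) (p : ℝ) (hp0 : 0 ≤ p) : Monotone (Sf n p) := by
  apply monotone_nat_of_le_succ
  intro l
  have he : (0:ℝ) < Real.exp 1 := Real.exp_pos 1
  have hn0 : (0:ℝ) ≤ n := Nat.cast_nonneg n
  have h := Sf_nonneg n p hp0 l
  have : (0:ℝ) ≤ 4 * Real.exp 1 * n * (1 + 2 * p * Sf n p l) := by positivity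
  rw [Sf]; linarith

lemma Sf_bound (n : ℕ) (p : ℝ) (hp0 : 0 ≤ p) :
    Sf n p n ≤ 4 * Real.exp 1 * n^2 * Real.exp (8 * Real.exp 1 * p * n^2) := by
  have he : (0:ℝ) < Real.exp 1 := Real.exp_pos 1
  have hn0 : (0:ℝ) ≤ n := Nat.cast_nonneg n
  set r : ℝ := 1 + 8 * Real.exp 1 * n * p with hr
  have hr1 : (1:ℝ) ≤ r := by
    have : (0:ℝ) ≤ 8 * Real.exp 1 * n * p := by positivity
    rw [hr]; linarith
  have key : ∀ l, Sf n p l ≤ 4 * Real.exp 1 * n * l * r ^ l := by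
    intro l
    induction l with
    | zero => simp [Sf]
    | succ l ih =>
      have hS := Sf_nonneg n p hp0 l
      have hrl : (1:ℝ) ≤ r ^ l := one_le_pow₀ hr1
      have hrl1 : (1:ℝ) ≤ r ^ (l+1) := one_le_pow₀ hr1
      have hrpos : (0:ℝ) ≤ r ^ l := by linarith
      have step : Sf n p (l+1) = Sf n p l * r + 4 * Real.exp 1 * n := by
        rw [Sf, hr]; ring
      have h1 : Sf n p l * r ≤ 4 * Real.exp 1 * n * l * r ^ (l+1) := by
        calc Sf n p l * r ≤ (4 * Real.exp 1 * n * l * r ^ l) * r :=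
              mul_le_mul_of_nonneg_right ih (by linarith)
          _ = 4 * Real.exp 1 * n * l * r ^ (l+1) := by rw [pow_succ]; ring
      have h2 : 4 * Real.exp 1 * n ≤ 4 * Real.exp 1 * n * r ^ (l+1) :=
        le_mul_of_one_le_right (by positivity) hrl1
      rw [step]
      push_cast
      nlinarith
  have h := key n
  have hrn : r ^ n ≤ Real.exp (8 * Real.exp 1 * p * n^2) := by
    have : r ≤ Real.exp (8 * Real.exp 1 * n * p) := by
      rw [hr]
      have := Real.add_one_le_exp (8 * Real.exp 1 * n * p)
      linarith
    calc r ^ n ≤ (Real.exp (8 * Real.exp 1 * n * p)) ^ n :=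
          pow_le_pow_left₀ (by linarith) this n
      _ = Real.exp (8 * Real.exp 1 * p * n^2) := by
          rw [← Real.exp_nat_mul]; ring_nf
  calc Sf n p n ≤ 4 * Real.exp 1 * n * n * r ^ n := h
    _ ≤ 4 * Real.exp 1 * n^2 * Real.exp (8 * Real.exp 1 * p * n^2) := by
        have h4 : (0:ℝ) ≤ 4 * Real.exp 1 * n * n := by positivity
        have := mul_le_mul_of_nonneg_left hrn h4
        calc 4 * Real.exp 1 * n * n * r ^ n
            ≤ 4 * Real.exp 1 * n * n * Real.exp (8 * Real.exp 1 * p * n^2) := this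
          _ = 4 * Real.exp 1 * n^2 * Real.exp (8 * Real.exp 1 * p * n^2) := by ring

lemma exp_bound (n : ℕ) (hn : 1 ≤ n) : (Real.exp 1)⁻¹ ≤ ((1:ℝ) - 1/n) ^ (n-1) := by
  have he : (0:ℝ) < Real.exp 1 := Real.exp_pos 1
  rcases eq_or_lt_of_le hn with h1 | h2
  · rw [← h1]
    norm_num
    rw [inv_le_one_iff₀]
    right
    exact Real.one_le_exp (by norm_num)
  · set m := n - 1 with hm
    have hmn : n = m + 1 := by omega
    have hm1 : 1 ≤ m := by omega
    have hmR : (0:ℝ) < m := by exact_mod_cast hm1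
    have hnR : (n:ℝ) = (m:ℝ) + 1 := by rw [hmn]; push_cast; ring
    have ha := Real.add_one_le_exp (1/(m:ℝ))
    have hfrac : ((1:ℝ)/m + 1) * (1 - 1/n) = 1 := by
      rw [hnR]; field_simp; ring
    have hpos : (0:ℝ) ≤ 1 - 1/n := by
      rw [hnR]
      have : (1:ℝ) ≤ (m:ℝ) + 1 := by linarith
      have h2 : (1:ℝ)/((m:ℝ)+1) ≤ 1 := by
        rw [div_le_one (by linarith)]; linarith
      linarith
    have hstep : (1:ℝ) ≤ Real.exp (1/(m:ℝ)) * (1 - 1/n) := by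
      calc (1:ℝ) = ((1:ℝ)/m + 1) * (1 - 1/n) := hfrac.symm
        _ ≤ Real.exp (1/(m:ℝ)) * (1 - 1/n) := mul_le_mul_of_nonneg_right ha hpos
    have hpow : (1:ℝ) ≤ (Real.exp (1/(m:ℝ)) * (1 - 1/n)) ^ m := one_le_pow₀ hstep
    have hexp : (Real.exp (1/(m:ℝ))) ^ m = Real.exp 1 := by
      rw [← Real.exp_nat_mul]
      congr 1
      field_simp
    have : (1:ℝ) ≤ Real.exp 1 * (1 - 1/n) ^ m := by
      rw [mul_pow, hexp] at hpow
      exact hpow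
    rw [inv_eq_one_div, div_le_iff₀ he]
    calc (1:ℝ) ≤ Real.exp 1 * (1 - 1/n) ^ m := this
      _ = (1 - 1/n) ^ (n-1) * Real.exp 1 := by rw [hm]; ring

lemma drift (n : ℕ) (p : ℝ) (hn : 1 ≤ n) (hp0 : 0 ≤ p) (hp12 : p ≤ 1/2)
    (x : Point n) (hx : x ≠ allOnes n) :
    ∑ y : Point n, stepEA n p x y * (Sf n p n - Sf n p (LO y))
      ≤ (Sf n p n - Sf n p (LO x)) - 1 := by
  have hp1 : p ≤ 1 := by linarith
  obtain ⟨k, hk1, hk2, hLO⟩ := firstZero_spec n x hx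
  set ℓ := LO x with hℓ
  set d : ℝ := Sf n p (ℓ+1) - Sf n p ℓ with hd
  have hd0 : 0 ≤ d := by
    rw [hd]; have := Sf_mono n p hp0 (Nat.le_succ ℓ); linarith
  have hSl0 : 0 ≤ Sf n p ℓ := Sf_nonneg n p hp0 ℓ
  set P := stepEA n p with hP
  set c : Point n → ℝ :=
    fun y => (if LO y < ℓ then Sf n p ℓ else 0) - (if ℓ < LO y then d else 0) with hc
  -- pointwise bound
  have hpoint : ∀ y : Point n, P x y * (Sf n p n - Sf n p (LO y))
      ≤ P x y * ((Sf n p n - Sf n p ℓ) + c y) := by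
    intro y
    apply mul_le_mul_of_nonneg_left _ (step_nonneg n p hn hp0 hp1 x y)
    rcases lt_trichotomy (LO y) ℓ with h | h | h
    · simp only [hc]
      simp only [if_pos h, if_neg (by omega : ¬ ℓ < LO y)]
      have : 0 ≤ Sf n p (LO y) := Sf_nonneg n p hp0 _
      linarith
    · simp [hc, h]
    · simp only [hc]
      simp only [if_neg (by omega : ¬ LO y < ℓ), if_pos h]
      have : Sf n p (ℓ+1) ≤ Sf n p (LO y) := Sf_mono n p hp0 (by omega)
      rw [hd]; linarith
  have hsum1 : ∑ y : Point n, P x y * ((Sf n p n - Sf n p ℓ) + c y)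
      = (Sf n p n - Sf n p ℓ)
        + (Sf n p ℓ * ∑ y ∈ Finset.univ.filter (fun y : Point n => LO y < ℓ), P x y
          - d * ∑ y ∈ Finset.univ.filter (fun y : Point n => ℓ < LO y), P x y) := by
    have expand : ∀ y : Point n, P x y * ((Sf n p n - Sf n p ℓ) + c y)
        = P x y * (Sf n p n - Sf n p ℓ)
          + (if LO y < ℓ then P x y * Sf n p ℓ else 0)
          - (if ℓ < LO y then P x y * d else 0) := by
      intro y
      simp only [hc]
      split_ifs <;> ring
    rw [Finset.sum_congr rfl (fun y _ => expand y)]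
    rw [Finset.sum_sub_distrib, Finset.sum_add_distrib, ← Finset.sum_mul,
      step_sum n p hn x, ← Finset.sum_filter, ← Finset.sum_filter,
      ← Finset.sum_mul, ← Finset.sum_mul]
    ring
  -- bound the fall part
  have hfall : Sf n p ℓ * ∑ y ∈ Finset.univ.filter (fun y : Point n => LO y < ℓ), P x y
      ≤ Sf n p ℓ * (2 * p) :=
    mul_le_mul_of_nonneg_left (step_fall n p hn hp0 hp1 x) hSl0
  -- bound the improvement part
  have himp : 1 / (4 * Real.exp 1 * n) ≤
      ∑ y ∈ Finset.univ.filter (fun y : Point n => ℓ < LO y), P x y := by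
    have hmem : Function.update x k true ∈
        Finset.univ.filter (fun y : Point n => ℓ < LO y) := by
      rw [Finset.mem_filter]
      refine ⟨Finset.mem_univ _, ?_⟩
      have := LO_upd n x k hk1 hk2
      omega
    have hstep := step_improve n p hn hp0 hp1 x k hk1 hk2
    have hlow : 1 / (4 * Real.exp 1 * n) ≤ (1 / n) * (1 - 1/n) ^ (n-1) * (1-p)^2 := by
      have he := Real.exp_pos 1
      have hn1 : (1:ℝ) ≤ n := by exact_mod_cast hn
      have hexp := exp_bound n hn
      have hq : (1/4 : ℝ) ≤ (1-p)^2 := by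
        have hhalf : (1:ℝ)/2 ≤ 1 - p := by linarith
        have := mul_le_mul hhalf hhalf (by norm_num) (by linarith)
        rw [pow_two]; linarith
      have h1n : (0:ℝ) < 1/n := by positivity
      have hbig : (Real.exp 1)⁻¹ * (1/4 : ℝ) * (1/n)
          ≤ (1 - 1/n) ^ (n-1) * (1-p)^2 * (1/n) := by
        apply mul_le_mul_of_nonneg_right _ (le_of_lt h1n)
        apply mul_le_mul (hexp) hq (by norm_num)
        have h1 : (1:ℝ)/n ≤ 1 := by
          rw [div_le_one (by linarith)]; linarith
        exact pow_nonneg (by linarith) _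
      calc 1 / (4 * Real.exp 1 * n) = (Real.exp 1)⁻¹ * (1/4 : ℝ) * (1/n) := by
            rw [one_div, one_div, one_div, mul_inv, mul_inv]; ring
        _ ≤ (1 - 1/n) ^ (n-1) * (1-p)^2 * (1/n) := hbig
        _ = (1 / n) * (1 - 1/n) ^ (n-1) * (1-p)^2 := by ring
    calc 1 / (4 * Real.exp 1 * n) ≤ (1 / n) * (1 - 1/n) ^ (n-1) * (1-p)^2 := hlow
      _ ≤ P x (Function.update x k true) := hstep
      _ ≤ _ := Finset.single_le_sum
          (fun y _ => step_nonneg n p hn hp0 hp1 x y) hmem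
  have hdval : d = 4 * Real.exp 1 * n * (1 + 2 * p * Sf n p ℓ) := by
    rw [hd, Sf]; ring
  have hdpart : d * (1 / (4 * Real.exp 1 * n))
      ≤ d * ∑ y ∈ Finset.univ.filter (fun y : Point n => ℓ < LO y), P x y :=
    mul_le_mul_of_nonneg_left himp hd0
  have hdexact : d * (1 / (4 * Real.exp 1 * n)) = 1 + 2 * p * Sf n p ℓ := by
    rw [hdval]
    have he := Real.exp_pos 1
    have hn1 : (0:ℝ) < n := by exact_mod_cast hn
    field_simp
  calc ∑ y : Point n, P x y * (Sf n p n - Sf n p (LO y))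
      ≤ ∑ y : Point n, P x y * ((Sf n p n - Sf n p ℓ) + c y) :=
        Finset.sum_le_sum (fun y _ => hpoint y)
    _ = (Sf n p n - Sf n p ℓ)
        + (Sf n p ℓ * ∑ y ∈ Finset.univ.filter (fun y : Point n => LO y < ℓ), P x y
          - d * ∑ y ∈ Finset.univ.filter (fun y : Point n => ℓ < LO y), P x y) := hsum1
    _ ≤ (Sf n p n - Sf n p ℓ) + (Sf n p ℓ * (2 * p) - (1 + 2 * p * Sf n p ℓ)) := by
        have := hdexact ▸ hdpart
        linarith [hfall, this]
    _ = (Sf n p n - Sf n p ℓ) - 1 := by ring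

section survive
variable (n : ℕ) (p : ℝ)

lemma survive_nonneg (hn : 1 ≤ n) (hp0 : 0 ≤ p) (hp1 : p ≤ 1) (opt : Point n) :
    ∀ t (x : Point n), 0 ≤ survive n (stepEA n p) opt t x := by
  intro t
  induction t with
  | zero =>
    intro x; rw [survive]; split_ifs <;> norm_num
  | succ t ih =>
    intro x; rw [survive]; split_ifs
    · exact le_refl 0
    · exact Finset.sum_nonneg fun y _ =>
        mul_nonneg (step_nonneg n p hn hp0 hp1 x y) (ih y)

lemma h_nonneg (hp0 : 0 ≤ p) (x : Point n) : 0 ≤ Sf n p n - Sf n p (LO x) := by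
  have := Sf_mono n p hp0 (LO_le n x)
  linarith

lemma sum_survive_le (hn : 1 ≤ n) (hp0 : 0 ≤ p) (hp12 : p ≤ 1/2) :
    ∀ T, ∀ x : Point n, ∑ t ∈ Finset.range T, survive n (stepEA n p) (allOnes n) t x
      ≤ Sf n p n - Sf n p (LO x) := by
  have hp1 : p ≤ 1 := by linarith
  intro T
  induction T with
  | zero => intro x; simpa using h_nonneg n p hp0 x
  | succ T ih =>
    intro x
    by_cases hx : x = allOnes n
    · have hz : ∀ t, survive n (stepEA n p) (allOnes n) t x = 0 := by
        intro t; cases t <;> (rw [survive]; rw [if_pos hx])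
      rw [Finset.sum_congr rfl (fun t _ => hz t), Finset.sum_const, smul_zero]
      exact h_nonneg n p hp0 x
    · rw [Finset.sum_range_succ']
      have h0 : survive n (stepEA n p) (allOnes n) 0 x = 1 := by
        rw [survive, if_neg hx]
      have hrec : ∀ t, survive n (stepEA n p) (allOnes n) (t+1) x
          = ∑ y : Point n, stepEA n p x y * survive n (stepEA n p) (allOnes n) t y := by
        intro t; rw [survive, if_neg hx]
      rw [h0, Finset.sum_congr rfl (fun t _ => hrec t), Finset.sum_comm]
      have hswap : ∑ y : Point n, ∑ t ∈ Finset.range T,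
          stepEA n p x y * survive n (stepEA n p) (allOnes n) t y
          = ∑ y : Point n, stepEA n p x y *
            ∑ t ∈ Finset.range T, survive n (stepEA n p) (allOnes n) t y := by
        exact Finset.sum_congr rfl fun y _ => (Finset.mul_sum _ _ _).symm
      rw [hswap]
      have hle : ∑ y : Point n, stepEA n p x y *
            (∑ t ∈ Finset.range T, survive n (stepEA n p) (allOnes n) t y)
          ≤ ∑ y : Point n, stepEA n p x y * (Sf n p n - Sf n p (LO y)) :=
        Finset.sum_le_sum fun y _ =>
          mul_le_mul_of_nonneg_left (ih y) (step_nonneg n p hn hp0 hp1 x y)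
      have hdrift := drift n p hn hp0 hp12 x hx
      linarith

end survive


/-- **Theorem (upper bound for the (1+1) EA on LeadingOnes with one-bit prior noise).**
There exist constants `C, c > 0` such that for every `n ≥ 1` and every
`0 ≤ p ≤ 1/2`, the expected optimisation time of the (1+1) EA with one-bit
prior noise probability `p` on LeadingOnes is at most `C · n² · e^(c·p·n²)`. -/
theorem EA_LeadingOnes_noise_upper_bound :
    ∃ C c : ℝ, 0 < C ∧ 0 < c ∧
      ∀ n : ℕ, 1 ≤ n → ∀ p : ℝ, 0 ≤ p → p ≤ 1 / 2 →
        EAtime n p ≤ ENNReal.ofReal (C * n ^ 2 * Real.exp (c * p * n ^ 2)) := by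
  refine ⟨8 * Real.exp 1, 8 * Real.exp 1, by positivity, by positivity, ?_⟩
  intro n hn p hp0 hp12
  have hp1 : p ≤ 1 := by linarith
  set M : ℝ := Sf n p n with hM
  have hM0 : 0 ≤ M := Sf_nonneg n p hp0 n
  have hhle : ∀ x : Point n, Sf n p n - Sf n p (LO x) ≤ M := by
    intro x
    have := Sf_nonneg n p hp0 (LO x)
    rw [hM]; linarith
  set a : ℕ → ℝ := fun t =>
    (Fintype.card (Point n) : ℝ)⁻¹ * ∑ x : Point n, survive n (stepEA n p) (allOnes n) t x
    with ha
  have hcard : (0:ℝ) < (Fintype.card (Point n) : ℝ) := by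
    exact_mod_cast Fintype.card_pos
  have ha0 : ∀ t, 0 ≤ a t := by
    intro t
    apply mul_nonneg (by positivity)
    exact Finset.sum_nonneg fun x _ => survive_nonneg n p hn hp0 hp1 (allOnes n) t x
  have hpartial : ∀ s : Finset ℕ, ∑ t ∈ s, a t ≤ M := by
    intro s
    obtain ⟨T, hT⟩ := Finset.exists_nat_subset_range s
    calc ∑ t ∈ s, a t ≤ ∑ t ∈ Finset.range T, a t :=
          Finset.sum_le_sum_of_subset_of_nonneg hT (fun t _ _ => ha0 t)
      _ = (Fintype.card (Point n) : ℝ)⁻¹ * ∑ t ∈ Finset.range T,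
            ∑ x : Point n, survive n (stepEA n p) (allOnes n) t x := by
          rw [Finset.mul_sum]
      _ = (Fintype.card (Point n) : ℝ)⁻¹ * ∑ x : Point n,
            ∑ t ∈ Finset.range T, survive n (stepEA n p) (allOnes n) t x := by
          rw [Finset.sum_comm]
      _ ≤ (Fintype.card (Point n) : ℝ)⁻¹ * ∑ x : Point n, M := by
          apply mul_le_mul_of_nonneg_left _ (by positivity)
          exact Finset.sum_le_sum fun x _ =>
            le_trans (sum_survive_le n p hn hp0 hp12 T x) (hhle x)
      _ = M := by
          rw [Finset.sum_const, Finset.card_univ, nsmul_eq_mul]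
          field_simp
  have htsum : ∑' t : ℕ, ENNReal.ofReal (a t) ≤ ENNReal.ofReal M := by
    apply Summable.tsum_le_of_sum_le ENNReal.summable
    intro s
    rw [← ENNReal.ofReal_sum_of_nonneg (fun t _ => ha0 t)]
    exact ENNReal.ofReal_le_ofReal (hpartial s)
  have hfinal : EAtime n p ≤ ENNReal.ofReal (2 * M) := by
    rw [EAtime, expectedTime]
    calc ((2:ℕ) : ℝ≥0∞) * ∑' t : ℕ, ENNReal.ofReal (a t)
        ≤ ((2:ℕ) : ℝ≥0∞) * ENNReal.ofReal M := by
          exact mul_le_mul_right htsum _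
      _ = ENNReal.ofReal 2 * ENNReal.ofReal M := by
          norm_num
      _ = ENNReal.ofReal (2 * M) := (ENNReal.ofReal_mul (by norm_num)).symm
  refine le_trans hfinal (ENNReal.ofReal_le_ofReal ?_)
  have hSb := Sf_bound n p hp0
  calc 2 * M ≤ 2 * (4 * Real.exp 1 * n^2 * Real.exp (8 * Real.exp 1 * p * n^2)) := by
        rw [hM]; linarith
    _ = 8 * Real.exp 1 * n^2 * Real.exp (8 * Real.exp 1 * p * n^2) := by ring
end

section
/- Consider the (1+1) EA with one-bit prior noise probability p ≤ 1/2 on LeadingOnes with n ≥ 2, and let P(x → y) denote the probability that the algorithm transitions from current search point x to current search point y in one generation. Then for all x, y ∈ {0,1}^n with LO(x) < LO(y), one has P(x → y) ≥ P(y → x). -/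
open Finset ENNReal

namespace StepAux

variable {n : ℕ}

/-- Flip the `i`-th bit of `x`. -/
def flip (x : Point n) (i : Fin n) : Point n := Function.update x i (!x i)

lemma flip_apply (x : Point n) (i j : Fin n) :
    flip x i j = if j = i then !x i else x j := Function.update_apply x i (!x i) j

lemma lo_lt_iff (z : Point n) (i : Fin n) :
    (i : ℕ) < LO z ↔ ∀ j : Fin n, j ≤ i → z j = true := by
  unfold LO
  constructor
  · intro h
    by_contra hc
    push_neg at hc
    obtain ⟨j, hj, hzj⟩ := hc
    have hsub : (Finset.univ.filter fun a : Fin n => ∀ j : Fin n, j ≤ a → z j = true)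
        ⊆ Finset.Iio i := by
      intro a ha
      simp only [Finset.mem_filter, Finset.mem_univ, true_and] at ha
      rw [Finset.mem_Iio]
      by_contra hne
      push_neg at hne
      exact hzj (ha j (le_trans hj hne))
    have := Finset.card_le_card hsub
    rw [Fin.card_Iio] at this
    omega
  · intro h
    have hsub : Finset.Iic i ⊆
        Finset.univ.filter fun a : Fin n => ∀ j : Fin n, j ≤ a → z j = true := by
      intro a ha
      simp only [Finset.mem_Iic] at ha
      simp only [Finset.mem_filter, Finset.mem_univ, true_and]
      exact fun j hj => h j (le_trans hj ha)
    have := Finset.card_le_card hsub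
    rw [Fin.card_Iic] at this
    omega

lemma bit_true {z : Point n} {i : Fin n} (h : (i : ℕ) < LO z) : z i = true :=
  ((lo_lt_iff z i).1 h) i le_rfl

lemma LO_le_n (z : Point n) : LO z ≤ n :=
  le_trans (Finset.card_filter_le _ _) (by simp)

lemma bit_false {z : Point n} (h : LO z < n) : z ⟨LO z, h⟩ = false := by
  rcases Bool.eq_false_or_eq_true (z ⟨LO z, h⟩) with hc | hc
  swap
  · exact hc
  · exfalso
    have : ((⟨LO z, h⟩ : Fin n) : ℕ) < LO z := by
      rw [lo_lt_iff]
      intro j hj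
      rcases lt_or_eq_of_le hj with h1 | h1
      · exact bit_true (by exact h1)
      · rw [h1]; exact hc
    simp at this

lemma LO_ge {z : Point n} {m : ℕ} (hm : m ≤ n) (h : ∀ i : Fin n, (i : ℕ) < m → z i = true) :
    m ≤ LO z := by
  rcases Nat.eq_zero_or_pos m with h0 | h0
  · omega
  have hlt : m - 1 < n := by omega
  have : ((⟨m - 1, hlt⟩ : Fin n) : ℕ) < LO z := by
    rw [lo_lt_iff]
    intro j hj
    have hj' : (j : ℕ) ≤ m - 1 := hj
    exact h j (by omega)
  simp only [] at this
  omega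

lemma LO_le_of {z : Point n} {m : ℕ} (hm : m < n) (h : z ⟨m, hm⟩ = false) : LO z ≤ m := by
  by_contra hc
  push_neg at hc
  have : z ⟨m, hm⟩ = true := bit_true (i := ⟨m, hm⟩) hc
  rw [this] at h
  exact Bool.noConfusion h

lemma flip_lt {z : Point n} {i : Fin n} (h : (i : ℕ) < LO z) : LO (flip z i) = (i : ℕ) := by
  apply le_antisymm
  · apply LO_le_of i.isLt
    have : (⟨(i : ℕ), i.isLt⟩ : Fin n) = i := rfl
    rw [this, flip_apply, if_pos rfl, bit_true h]
    rfl
  · apply LO_ge (le_of_lt i.isLt)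
    intro j hj
    rw [flip_apply, if_neg (by intro he; rw [he] at hj; omega)]
    exact bit_true (lt_trans hj h)

lemma flip_gt {z : Point n} {i : Fin n} (h : LO z < (i : ℕ)) : LO (flip z i) = LO z := by
  have hk : LO z < n := lt_of_lt_of_le h (le_of_lt i.isLt)
  apply le_antisymm
  · apply LO_le_of hk
    rw [flip_apply, if_neg (by intro he; have : LO z = (i : ℕ) := congrArg Fin.val he; omega)]
    exact bit_false hk
  · apply LO_ge (LO_le_n z)
    intro j hj
    rw [flip_apply, if_neg (by intro he; rw [he] at hj; omega)]
    exact bit_true hj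

lemma flip_eq {z : Point n} {i : Fin n} (h : (i : ℕ) = LO z) : LO z < LO (flip z i) := by
  rw [← h]
  rw [lo_lt_iff]
  intro j hj
  rcases lt_or_eq_of_le hj with h1 | h1
  · rw [flip_apply, if_neg (by intro he; rw [he] at h1; exact lt_irrefl _ h1)]
    exact bit_true (by rw [← h]; exact h1)
  · rw [h1, flip_apply, if_pos rfl]
    have hzi : z i = false := by
      have : i = ⟨LO z, h ▸ i.isLt⟩ := Fin.ext h
      rw [this]
      exact bit_false _
    rw [hzi]
    rfl

lemma hamming_one_iff (z u : Point n) :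
    hammingDist z u = 1 ↔ ∃ i, u = flip z i := by
  constructor
  · intro h
    rw [hammingDist, Finset.card_eq_one] at h
    obtain ⟨i, hi⟩ := h
    refine ⟨i, funext fun j => ?_⟩
    rw [flip_apply]
    by_cases hj : j = i
    · subst hj
      have hm : j ∈ ({j | z j ≠ u j} : Finset (Fin n)) := by
        rw [hi]; exact Finset.mem_singleton_self j
      simp only [Finset.mem_filter, Finset.mem_univ, true_and] at hm
      rw [if_pos rfl]
      revert hm; cases z j <;> cases u j <;> simp
    · have hm : j ∉ ({j' | z j' ≠ u j'} : Finset (Fin n)) := by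
        rw [hi]; simp [hj]
      simp only [Finset.mem_filter, Finset.mem_univ, true_and, not_not] at hm
      rw [if_neg hj, hm]
  · rintro ⟨i, rfl⟩
    rw [hammingDist, Finset.card_eq_one]
    refine ⟨i, ?_⟩
    ext j
    simp only [Finset.mem_filter, Finset.mem_univ, true_and, Finset.mem_singleton]
    rw [flip_apply]
    by_cases hj : j = i
    · subst hj; rw [if_pos rfl]; cases z j <;> simp
    · rw [if_neg hj]; simp [hj]

lemma flip_injective (z : Point n) : Function.Injective (flip z) := by
  intro i j h
  by_contra hne
  have h1 := congrFun h i
  rw [flip_apply, flip_apply, if_pos rfl, if_neg hne] at h1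
  cases z i <;> simp_all

lemma noise_sum (p : ℝ) (z : Point n) (h : Point n → ℝ) :
    ∑ u : Point n, oneBitNoise n p z u * h u
      = (1 - p) * h z + (p / n) * ∑ i : Fin n, h (flip z i) := by
  unfold oneBitNoise
  rw [Finset.sum_congr rfl fun u _ => add_mul _ _ _, Finset.sum_add_distrib]
  congr 1
  · simp [ite_mul, Finset.sum_ite_eq']
  · have h1 : ∀ u : Point n, (if hammingDist z u = 1 then p / n else 0) * h u
        = if hammingDist z u = 1 then p / n * h u else 0 := by
      intro u; split <;> simp
    rw [Finset.sum_congr rfl fun u _ => h1 u, ← Finset.sum_filter]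
    have h2 : Finset.univ.filter (fun u : Point n => hammingDist z u = 1)
        = Finset.univ.image (flip z) := by
      ext u
      simp only [Finset.mem_filter, Finset.mem_univ, true_and, Finset.mem_image,
        hamming_one_iff]
      constructor
      · rintro ⟨i, rfl⟩; exact ⟨i, rfl⟩
      · rintro ⟨i, rfl⟩; exact ⟨i, rfl⟩
    rw [h2, Finset.sum_image fun a _ b _ hab => flip_injective z hab, Finset.mul_sum]

lemma accProb_eq (p : ℝ) (f : Point n → ℝ) (x y : Point n) :
    accProb n (oneBitNoise n p) f x y
      = (1 - p) * ((1 - p) * (if f x ≤ f y then (1 : ℝ) else 0)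
            + (p / n) * ∑ j : Fin n, (if f x ≤ f (flip y j) then (1 : ℝ) else 0))
        + (p / n) * ∑ i : Fin n,
            ((1 - p) * (if f (flip x i) ≤ f y then (1 : ℝ) else 0)
              + (p / n) * ∑ j : Fin n, (if f (flip x i) ≤ f (flip y j) then (1 : ℝ) else 0)) := by
  unfold accProb
  have h1 : ∀ u : Point n,
      ∑ v : Point n, oneBitNoise n p x u * oneBitNoise n p y v
          * (if f u ≤ f v then (1 : ℝ) else 0)
      = oneBitNoise n p x u * ((1 - p) * (if f u ≤ f y then (1 : ℝ) else 0)
          + (p / n) * ∑ j : Fin n, (if f u ≤ f (flip y j) then (1 : ℝ) else 0)) := by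
    intro u
    rw [← noise_sum p y fun v => if f u ≤ f v then (1 : ℝ) else 0, Finset.mul_sum]
    exact Finset.sum_congr rfl fun v _ => mul_assoc _ _ _
  rw [Finset.sum_congr rfl fun u _ => h1 u]
  exact noise_sum p x _

lemma ite_le_ite_of_imp {P Q : Prop} [Decidable P] [Decidable Q] (h : P → Q) :
    (if P then (1 : ℝ) else 0) ≤ if Q then (1 : ℝ) else 0 := by
  by_cases hP : P
  · rw [if_pos hP, if_pos (h hP)]
  · rw [if_neg hP]
    split <;> norm_num

lemma ite01_nonneg {P : Prop} [Decidable P] : (0 : ℝ) ≤ if P then (1 : ℝ) else 0 := by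
  split <;> norm_num

lemma ite01_le_one {P : Prop} [Decidable P] : (if P then (1 : ℝ) else 0) ≤ 1 := by
  split <;> norm_num

lemma sum_ind (P : ℕ → Prop) [DecidablePred P] :
    ∑ j : Fin n, (if P (j : ℕ) then (1 : ℝ) else 0)
      = (((Finset.range n).filter P).card : ℝ) := by
  rw [Fin.sum_univ_eq_sum_range (fun t => if P t then (1 : ℝ) else 0) n, Finset.sum_boole]

lemma count_ge {c : ℕ} (hc : c ≤ n) :
    ∑ j : Fin n, (if c ≤ (j : ℕ) then (1 : ℝ) else 0) = (n : ℝ) - c := by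
  rw [sum_ind]
  have h : (Finset.range n).filter (fun t => c ≤ t) = Finset.Ico c n := by
    ext t
    simp only [Finset.mem_filter, Finset.mem_range, Finset.mem_Ico]
    omega
  rw [h, Nat.card_Ico, Nat.cast_sub hc]

lemma count_le {c : ℕ} (hc : c < n) :
    ∑ j : Fin n, (if (j : ℕ) ≤ c then (1 : ℝ) else 0) = (c : ℝ) + 1 := by
  rw [sum_ind fun t => t ≤ c]
  have h : (Finset.range n).filter (fun t => t ≤ c) = Finset.range (c + 1) := by
    ext t
    simp only [Finset.mem_filter, Finset.mem_range]
    omega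
  rw [h, Finset.card_range]
  push_cast
  ring

lemma count_gt {c : ℕ} (hc : c < n) :
    ∑ j : Fin n, (if c < (j : ℕ) then (1 : ℝ) else 0) = (n : ℝ) - c - 1 := by
  rw [sum_ind]
  have h : (Finset.range n).filter (fun t => c < t) = Finset.Ico (c + 1) n := by
    ext t
    simp only [Finset.mem_filter, Finset.mem_range, Finset.mem_Ico]
    omega
  rw [h, Nat.card_Ico, Nat.cast_sub hc]
  push_cast
  ring

lemma count_lt {c : ℕ} (hc : c ≤ n) :
    ∑ j : Fin n, (if (j : ℕ) < c then (1 : ℝ) else 0) = (c : ℝ) := by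
  rw [sum_ind fun t => t < c]
  have h : (Finset.range n).filter (fun t => t < c) = Finset.range c := by
    ext t
    simp only [Finset.mem_filter, Finset.mem_range]
    omega
  rw [h, Finset.card_range]

lemma count_eq {c : ℕ} (hc : c < n) :
    ∑ j : Fin n, (if (j : ℕ) = c then (1 : ℝ) else 0) = 1 := by
  rw [sum_ind fun t => t = c]
  have h : (Finset.range n).filter (fun t => t = c) = {c} := by
    ext t
    simp only [Finset.mem_filter, Finset.mem_range, Finset.mem_singleton]
    omega
  rw [h, Finset.card_singleton]
  norm_num

lemma count_ne {c : ℕ} (hc : c < n) :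
    ∑ j : Fin n, (if (j : ℕ) ≠ c then (1 : ℝ) else 0) = (n : ℝ) - 1 := by
  rw [sum_ind fun t => t ≠ c]
  have h : (Finset.range n).filter (fun t => t ≠ c) = (Finset.range n).erase c :=
    Finset.filter_ne' _ _
  rw [h, Finset.card_erase_of_mem (Finset.mem_range.mpr hc), Finset.card_range,
    Nat.cast_sub (by omega : 1 ≤ n)]
  norm_num

lemma gauss (k : ℕ) : ∑ I ∈ Finset.range k, (I : ℝ) = k * ((k : ℝ) - 1) / 2 := by
  induction k with
  | zero => simp
  | succ m ih =>
    rw [Finset.sum_range_succ, ih]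
    push_cast
    ring

lemma G_sum {k : ℕ} (hk : k < n) :
    ∑ I ∈ Finset.range n, (if I = k then -(n : ℝ) else ((n : ℝ) - 1 - 2 * (min I k : ℕ)))
      = ((n : ℝ) - k) * ((n : ℝ) - k) - 3 * ((n : ℝ) - k) + 1 := by
  have h1 : ∀ I ∈ Finset.range n,
      (if I = k then -(n : ℝ) else ((n : ℝ) - 1 - 2 * (min I k : ℕ)))
        = ((n : ℝ) - 1 - 2 * (min I k : ℕ))
            - (if I = k then 2 * (n : ℝ) - 1 - 2 * k else 0) := by
    intro I _
    by_cases h : I = k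
    · rw [if_pos h, if_pos h, h, min_self]; ring
    · rw [if_neg h, if_neg h]; ring
  rw [Finset.sum_congr rfl h1, Finset.sum_sub_distrib,
    Finset.sum_ite_eq' (Finset.range n) k fun _ => 2 * (n : ℝ) - 1 - 2 * k,
    if_pos (Finset.mem_range.mpr hk)]
  have h2 : ∑ I ∈ Finset.range n, ((n : ℝ) - 1 - 2 * (min I k : ℕ))
      = (∑ I ∈ Finset.range k, ((n : ℝ) - 1 - 2 * (I : ℕ)))
        + ∑ I ∈ Finset.Ico k n, ((n : ℝ) - 1 - 2 * (k : ℕ)) := by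
    rw [← Finset.sum_range_add_sum_Ico _ (le_of_lt hk)]
    congr 1
    · exact Finset.sum_congr rfl fun I hI => by
        rw [min_eq_left (le_of_lt (Finset.mem_range.mp hI))]
    · exact Finset.sum_congr rfl fun I hI => by
        rw [min_eq_right ((Finset.mem_Ico.mp hI).1)]
  rw [h2]
  have h3 : ∑ I ∈ Finset.range k, ((n : ℝ) - 1 - 2 * (I : ℕ))
      = k * ((n : ℝ) - 1) - 2 * ((k : ℝ) * ((k : ℝ) - 1) / 2) := by
    rw [Finset.sum_sub_distrib, Finset.sum_const, ← Finset.mul_sum, gauss,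
      Finset.card_range, nsmul_eq_mul]
  rw [h3, Finset.sum_const, Nat.card_Ico, nsmul_eq_mul, Nat.cast_sub (le_of_lt hk)]
  ring

lemma neg_one_le_diff {P Q : Prop} [Decidable P] [Decidable Q] :
    (-1 : ℝ) ≤ (if P then (1 : ℝ) else 0) - (if Q then (1 : ℝ) else 0) := by
  have h1 : (0 : ℝ) ≤ if P then (1 : ℝ) else 0 := ite01_nonneg
  have h2 : (if Q then (1 : ℝ) else 0) ≤ 1 := ite01_le_one
  linarith

lemma final_ineq (p q N K S1 S2 S3 S4 V W : ℝ)
    (hq0 : 0 ≤ q) (hp0 : 0 ≤ p) (hp2 : p ≤ 1 / 2)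
    (hqn : q * N = p) (hN : 2 ≤ N) (hK0 : 0 ≤ K) (hKN : K + 1 ≤ N)
    (hS1 : N - K ≤ S1) (hS2 : N - 1 ≤ S2) (hS3 : S3 ≤ 1) (hS4 : S4 ≤ K + 1)
    (hVW : (N - K) * (N - K) - 3 * (N - K) + 1 ≤ V - W) :
    (1 - p) * ((1 - p) * 0 + q * S3) + q * ((1 - p) * S4 + q * W)
      ≤ (1 - p) * ((1 - p) * 1 + q * S1) + q * ((1 - p) * S2 + q * V) := by
  have hp1 : 0 ≤ 1 - p := by linarith
  have hpq : 0 ≤ (1 - p) * q := mul_nonneg hp1 hq0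
  have hc1 : (1 - p) * q * (2 * (N - K) - 3) ≤ (1 - p) * q * (S1 + S2 - S3 - S4) :=
    mul_le_mul_of_nonneg_left (by linarith) hpq
  have hc2 : q * q * ((N - K) * (N - K) - 3 * (N - K) + 1) ≤ q * q * (V - W) :=
    mul_le_mul_of_nonneg_left hVW (mul_nonneg hq0 hq0)
  have hqM : q * 1 ≤ q * (N - K) := mul_le_mul_of_nonneg_left (by linarith) hq0
  have hq2 : q * 2 ≤ q * N := mul_le_mul_of_nonneg_left hN hq0
  have hs : 0 ≤ (1 - p) + q * (N - K) - 3 * q := by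
    have hqp : q * 2 ≤ p := by rw [← hqn]; exact hq2
    nlinarith
  have hs0 : 0 ≤ (1 - p) + q * (N - K) := by linarith
  have hpos : 0 ≤ ((1 - p) + q * (N - K)) * (((1 - p) + q * (N - K)) - 3 * q) :=
    mul_nonneg hs0 hs
  have hid : (1 - p) * (1 - p) + (1 - p) * q * (2 * (N - K) - 3)
      + q * q * ((N - K) * (N - K) - 3 * (N - K) + 1)
      = ((1 - p) + q * (N - K)) * (((1 - p) + q * (N - K)) - 3 * q) + q * q := by
    ring
  nlinarith [hc1, hc2, hpos, hid, mul_self_nonneg q]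

end StepAux

/-- **Lemma (transitions towards higher LeadingOnes values are at least as likely).**
For the (1+1) EA with one-bit prior noise probability `p ≤ 1/2` on LeadingOnes
with `n ≥ 2`: for all search points `x, y` with `LO(x) < LO(y)`, the one-generation
transition probability from `x` to `y` is at least that from `y` to `x`. -/
theorem stepEA_monotone (n : ℕ) (hn : 2 ≤ n) (p : ℝ) (hp0 : 0 ≤ p) (hp : p ≤ 1 / 2)
    (x y : Point n) (hLO : LO x < LO y) :
    stepEA n p y x ≤ stepEA n p x y := by
  have hln : LO y ≤ n := StepAux.LO_le_n y
  have hkn : LO x < n := lt_of_lt_of_le hLO hln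
  have hxy : ¬(x = y) := fun h => by rw [h] at hLO; exact lt_irrefl _ hLO
  have hyx : ¬(y = x) := fun h => hxy h.symm
  have hn0 : (0 : ℝ) < n := by
    have : 0 < n := by omega
    exact_mod_cast this
  have hacc : accProb n (oneBitNoise n p) (fun z => (LO z : ℝ)) y x
      ≤ accProb n (oneBitNoise n p) (fun z => (LO z : ℝ)) x y := by
    rw [StepAux.accProb_eq, StepAux.accProb_eq]
    simp only [Nat.cast_le]
    rw [if_neg (not_le.mpr hLO), if_pos (le_of_lt hLO)]
    simp only [Finset.sum_add_distrib, ← Finset.mul_sum]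
    have hbge : ∀ j : Fin n, LO x ≤ (j : ℕ) → LO x ≤ LO (StepAux.flip y j) := by
      intro j hj
      rcases Nat.lt_trichotomy (j : ℕ) (LO y) with h | h | h
      · rw [StepAux.flip_lt h]; exact hj
      · exact le_of_lt (lt_trans hLO (StepAux.flip_eq h))
      · rw [StepAux.flip_gt h]; exact le_of_lt hLO
    have hbgt : ∀ j : Fin n, LO x < (j : ℕ) → LO x < LO (StepAux.flip y j) := by
      intro j hj
      rcases Nat.lt_trichotomy (j : ℕ) (LO y) with h | h | h
      · rw [StepAux.flip_lt h]; exact hj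
      · exact lt_trans hLO (StepAux.flip_eq h)
      · rw [StepAux.flip_gt h]; exact hLO
    have hale : ∀ i : Fin n, (i : ℕ) ≠ LO x → LO (StepAux.flip x i) ≤ LO x := by
      intro i hi
      rcases Nat.lt_or_ge (i : ℕ) (LO x) with h | h
      · rw [StepAux.flip_lt h]; omega
      · rw [StepAux.flip_gt (by omega)]
    have hS1 : (n : ℝ) - (LO x : ℕ)
        ≤ ∑ j : Fin n, if LO x ≤ LO (StepAux.flip y j) then (1 : ℝ) else 0 := by
      rw [← StepAux.count_ge (le_of_lt hkn)]
      exact Finset.sum_le_sum fun j _ => StepAux.ite_le_ite_of_imp (hbge j)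
    have hS2 : (n : ℝ) - 1
        ≤ ∑ i : Fin n, if LO (StepAux.flip x i) ≤ LO y then (1 : ℝ) else 0 := by
      rw [← StepAux.count_ne hkn]
      exact Finset.sum_le_sum fun i _ => StepAux.ite_le_ite_of_imp fun hi =>
        le_of_lt (lt_of_le_of_lt (hale i hi) hLO)
    have hS3 : (∑ i : Fin n, if LO y ≤ LO (StepAux.flip x i) then (1 : ℝ) else 0) ≤ 1 := by
      calc (∑ i : Fin n, if LO y ≤ LO (StepAux.flip x i) then (1 : ℝ) else 0)
          ≤ ∑ i : Fin n, if (i : ℕ) = LO x then (1 : ℝ) else 0 := by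
            refine Finset.sum_le_sum fun i _ => StepAux.ite_le_ite_of_imp fun hi => ?_
            by_contra hne
            exact absurd hi (not_le.mpr (lt_of_le_of_lt (hale i hne) hLO))
        _ = 1 := StepAux.count_eq hkn
    have hS4 : (∑ j : Fin n, if LO (StepAux.flip y j) ≤ LO x then (1 : ℝ) else 0)
        ≤ (LO x : ℝ) + 1 := by
      rw [← StepAux.count_le hkn]
      refine Finset.sum_le_sum fun j _ => StepAux.ite_le_ite_of_imp fun hj => ?_
      by_contra hne
      exact absurd hj (not_le.mpr (hbgt j (by omega)))
    have hswap : (∑ i : Fin n, ∑ j : Fin n,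
          if LO (StepAux.flip y i) ≤ LO (StepAux.flip x j) then (1 : ℝ) else 0)
        = ∑ i : Fin n, ∑ j : Fin n,
            if LO (StepAux.flip y j) ≤ LO (StepAux.flip x i) then (1 : ℝ) else 0 :=
      Finset.sum_comm
    have hVW : ((n : ℝ) - (LO x : ℕ)) * ((n : ℝ) - (LO x : ℕ)) - 3 * ((n : ℝ) - (LO x : ℕ)) + 1
        ≤ (∑ i : Fin n, ∑ j : Fin n,
              if LO (StepAux.flip x i) ≤ LO (StepAux.flip y j) then (1 : ℝ) else 0)
          - ∑ i : Fin n, ∑ j : Fin n,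
              if LO (StepAux.flip y i) ≤ LO (StepAux.flip x j) then (1 : ℝ) else 0 := by
      rw [hswap]
      simp only [← Finset.sum_sub_distrib]
      rw [← StepAux.G_sum hkn, ← Fin.sum_univ_eq_sum_range
        (fun I => if I = LO x then -(n : ℝ) else ((n : ℝ) - 1 - 2 * (min I (LO x) : ℕ))) n]
      refine Finset.sum_le_sum fun i _ => ?_
      by_cases hik : (i : ℕ) = LO x
      · rw [if_pos hik]
        have hstep : ∑ _j : Fin n, (-1 : ℝ) ≤ ∑ j : Fin n,
            ((if LO (StepAux.flip x i) ≤ LO (StepAux.flip y j) then (1 : ℝ) else 0)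
              - if LO (StepAux.flip y j) ≤ LO (StepAux.flip x i) then (1 : ℝ) else 0) :=
          Finset.sum_le_sum fun j _ => StepAux.neg_one_le_diff
        calc -(n : ℝ) = ∑ _j : Fin n, (-1 : ℝ) := by
              rw [Finset.sum_const, Finset.card_univ, Fintype.card_fin, nsmul_eq_mul,
                mul_neg_one]
          _ ≤ _ := hstep
      · rw [if_neg hik]
        have hcount : ∑ j : Fin n,
            ((if min (i : ℕ) (LO x) < (j : ℕ) then (1 : ℝ) else 0)
              - if (j : ℕ) < min (i : ℕ) (LO x) then (1 : ℝ) else 0)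
            = ((n : ℝ) - (min (i : ℕ) (LO x) : ℕ) - 1) - (min (i : ℕ) (LO x) : ℕ) := by
          rw [Finset.sum_sub_distrib, StepAux.count_gt (c := min (i : ℕ) (LO x)) (by omega),
            StepAux.count_lt (c := min (i : ℕ) (LO x)) (by omega)]
        have hpt : ∀ j : Fin n,
            ((if min (i : ℕ) (LO x) < (j : ℕ) then (1 : ℝ) else 0)
              - if (j : ℕ) < min (i : ℕ) (LO x) then (1 : ℝ) else 0)
            ≤ (if LO (StepAux.flip x i) ≤ LO (StepAux.flip y j) then (1 : ℝ) else 0)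
              - if LO (StepAux.flip y j) ≤ LO (StepAux.flip x i) then (1 : ℝ) else 0 := by
          intro j
          rcases Nat.lt_or_ge (i : ℕ) (LO x) with hi | hi
          · rw [min_eq_left (le_of_lt hi)]
            have hai : LO (StepAux.flip x i) = (i : ℕ) := StepAux.flip_lt hi
            rcases Nat.lt_trichotomy (j : ℕ) (i : ℕ) with hj | hj | hj
            · rw [if_neg (by omega), if_pos hj]
              linarith [StepAux.neg_one_le_diff
                (P := LO (StepAux.flip x i) ≤ LO (StepAux.flip y j))
                (Q := LO (StepAux.flip y j) ≤ LO (StepAux.flip x i))]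
            · have hbj : LO (StepAux.flip y j) = (j : ℕ) := StepAux.flip_lt (by omega)
              rw [if_neg (by omega), if_neg (by omega), hai, hbj,
                if_pos (by omega), if_pos (by omega)]
              norm_num
            · have hbj : (i : ℕ) < LO (StepAux.flip y j) := by
                rcases Nat.lt_trichotomy (j : ℕ) (LO y) with h | h | h
                · rw [StepAux.flip_lt h]; omega
                · have := StepAux.flip_eq h; omega
                · rw [StepAux.flip_gt h]; omega
              rw [if_pos hj, if_neg (by omega), hai,
                if_pos (le_of_lt hbj), if_neg (not_le.mpr hbj)]
          · have hik2 : LO x < (i : ℕ) := by omega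
            rw [min_eq_right (by omega)]
            have hai : LO (StepAux.flip x i) = LO x := StepAux.flip_gt hik2
            rcases Nat.lt_trichotomy (j : ℕ) (LO x) with hj | hj | hj
            · rw [if_neg (by omega), if_pos hj]
              linarith [StepAux.neg_one_le_diff
                (P := LO (StepAux.flip x i) ≤ LO (StepAux.flip y j))
                (Q := LO (StepAux.flip y j) ≤ LO (StepAux.flip x i))]
            · have hbj : LO (StepAux.flip y j) = (j : ℕ) := StepAux.flip_lt (by omega)
              rw [if_neg (by omega), if_neg (by omega), hai, hbj,
                if_pos (by omega), if_pos (by omega)]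
              norm_num
            · have hbj : LO x < LO (StepAux.flip y j) := hbgt j hj
              rw [if_pos hj, if_neg (by omega), hai,
                if_pos (le_of_lt hbj), if_neg (not_le.mpr hbj)]
        calc ((n : ℝ) - 1 - 2 * (min (i : ℕ) (LO x) : ℕ))
            = ((n : ℝ) - (min (i : ℕ) (LO x) : ℕ) - 1) - (min (i : ℕ) (LO x) : ℕ) := by ring
          _ = _ := hcount.symm
          _ ≤ _ := Finset.sum_le_sum fun j _ => hpt j
    have hqn : p / (n : ℝ) * (n : ℝ) = p := div_mul_cancel₀ p (ne_of_gt hn0)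
    have hN : (2 : ℝ) ≤ (n : ℝ) := by exact_mod_cast hn
    have hK0 : (0 : ℝ) ≤ ((LO x : ℕ) : ℝ) := Nat.cast_nonneg _
    have hKN : ((LO x : ℕ) : ℝ) + 1 ≤ (n : ℝ) := by
      have h : (LO x : ℕ) + 1 ≤ n := hkn
      exact_mod_cast h
    have hq0 : (0 : ℝ) ≤ p / n := div_nonneg hp0 (le_of_lt hn0)
    exact StepAux.final_ineq p (p / n) n (LO x) _ _ _ _ _ _
      hq0 hp0 hp hqn hN hK0 hKN hS1 hS2 hS3 hS4 hVW

  unfold stepEA step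
  rw [if_neg hxy, if_neg hyx, add_zero, add_zero]
  have hmut : mutProb n y x = mutProb n x y := by
    unfold mutProb
    rw [hammingDist_comm]
  rw [hmut]
  apply mul_le_mul_of_nonneg_left hacc
  have h1n : (0 : ℝ) ≤ 1 - 1 / n := by
    rw [sub_nonneg, div_le_one hn0]
    exact_mod_cast (by omega : 1 ≤ n)
  exact mul_nonneg (pow_nonneg (by positivity) _) (pow_nonneg h1n _)
end

section
/- Let n ≥ 1, λ ∈ ℕ, p ∈ [0,1] and set q := (1 − 1/n)^n. Then (i) Σ_{i=0}^{λ} C(λ,i)·q^i·(1−q)^{λ−i}·p^{i+1} = p·(1 − q·(1−p))^λ, and (ii) (1 − (1 − 1/n)^n·(1−p))^λ ≤ ((e − (1−p))/e)^λ · exp((λ/n)·(1−p)/(e − (1−p))). Consequently, the probability that all copies of the parent among parent and λ offspring are affected by noise is at most p·((e−(1−p))/e)^λ·exp((λ/n)·(1−p)/(e−(1−p))). -/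
lemma one_add_inv_pow_le_exp (m : ℕ) (hm : 1 ≤ m) :
    (1 + 1 / (m : ℝ)) ^ m ≤ Real.exp 1 := by
  have hm' : (0 : ℝ) < m := by exact_mod_cast hm
  have h1 : (1 + 1 / (m : ℝ)) ≤ Real.exp (1 / m) := by
    have := Real.add_one_le_exp (1 / (m : ℝ)); linarith
  calc (1 + 1 / (m : ℝ)) ^ m ≤ (Real.exp (1 / m)) ^ m := by
        apply pow_le_pow_left₀ (by positivity) h1
    _ = Real.exp 1 := by
        rw [← Real.exp_nat_mul]; congr 1; field_simp

lemma self_le_exp_mul_pow (n : ℕ) (hn : 1 ≤ n) :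
    (1 - 1 / (n : ℝ)) ≤ Real.exp 1 * (1 - 1 / (n : ℝ)) ^ n := by
  rcases Nat.lt_or_ge n 2 with h2 | h2
  · interval_cases n
    · simp
  · -- n ≥ 2
    set t : ℝ := 1 - 1 / (n : ℝ) with ht
    have hn' : (2 : ℝ) ≤ n := by exact_mod_cast h2
    have htpos : 0 < t := by
      have h : 1 / (n : ℝ) < 1 := by
        rw [div_lt_one (by linarith)]; linarith
      rw [ht]; linarith
    have hm : 1 ≤ n - 1 := by omega
    have hcast : ((n - 1 : ℕ) : ℝ) = (n : ℝ) - 1 := by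
      have : (1:ℕ) ≤ n := hn
      push_cast [Nat.cast_sub this]; ring
    have hne : (n : ℝ) - 1 ≠ 0 := by linarith
    have hinv : 1 / t = 1 + 1 / ((n - 1 : ℕ) : ℝ) := by
      rw [hcast, ht]
      field_simp
      ring
    have hkey : (1 / t) ^ (n - 1) ≤ Real.exp 1 := by
      rw [hinv]; exact one_add_inv_pow_le_exp (n - 1) hm
    have h1 : 1 ≤ Real.exp 1 * t ^ (n - 1) := by
      have := mul_le_mul_of_nonneg_right hkey (le_of_lt (pow_pos htpos (n - 1)))
      have heq : (1 / t) ^ (n - 1) * t ^ (n - 1) = 1 := by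
        rw [← mul_pow]; field_simp; simp
      rwa [heq] at this
    have hpow : t ^ n = t ^ (n - 1) * t := by
      rw [← pow_succ]; congr 1; omega
    calc t = 1 * t := (one_mul t).symm
      _ ≤ (Real.exp 1 * t ^ (n - 1)) * t :=
          mul_le_mul_of_nonneg_right h1 (le_of_lt htpos)
      _ = Real.exp 1 * t ^ n := by rw [hpow]; ring

/-- **Lemma (all copies of the parent affected by noise).**
Let `n ≥ 1`, `λ ∈ ℕ`, `p ∈ [0,1]` and `q := (1 − 1/n)^n` (the probability that
standard bit mutation creates a clone of the parent). Then
(i) `Σ_{i=0}^{λ} C(λ,i)·q^i·(1−q)^{λ−i}·p^{i+1} = p·(1 − q·(1−p))^λ`,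
(ii) `(1 − (1−1/n)^n·(1−p))^λ ≤ ((e−(1−p))/e)^λ · exp((λ/n)·(1−p)/(e−(1−p)))`,
and consequently the probability that all copies of the parent among parent and
`λ` offspring are affected by noise is at most
`p·((e−(1−p))/e)^λ·exp((λ/n)·(1−p)/(e−(1−p)))`. -/
theorem all_clones_noisy_bound (n lam : ℕ) (p : ℝ)
    (hn : 1 ≤ n) (hp0 : 0 ≤ p) (hp1 : p ≤ 1) :
    (∑ i ∈ Finset.range (lam + 1),
        (lam.choose i : ℝ) * ((1 - 1 / n) ^ n) ^ i
          * (1 - (1 - 1 / n) ^ n) ^ (lam - i) * p ^ (i + 1)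
      = p * (1 - (1 - 1 / n) ^ n * (1 - p)) ^ lam)
    ∧ (1 - (1 - 1 / n) ^ n * (1 - p)) ^ lam
        ≤ ((Real.exp 1 - (1 - p)) / Real.exp 1) ^ lam
          * Real.exp ((lam / n) * (1 - p) / (Real.exp 1 - (1 - p)))
    ∧ p * (1 - (1 - 1 / n) ^ n * (1 - p)) ^ lam
        ≤ p * (((Real.exp 1 - (1 - p)) / Real.exp 1) ^ lam
            * Real.exp ((lam / n) * (1 - p) / (Real.exp 1 - (1 - p)))) := by
  have hnpos : (0 : ℝ) < n := by exact_mod_cast hn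
  set t : ℝ := 1 - 1 / (n : ℝ) with ht
  set q : ℝ := t ^ n with hq
  have ht0 : 0 ≤ t := by
    have h : 1 / (n : ℝ) ≤ 1 := by
      rw [div_le_one hnpos]; exact_mod_cast hn
    rw [ht]; linarith
  have ht1 : t ≤ 1 := by
    have h : 0 ≤ 1 / (n : ℝ) := by positivity
    rw [ht]; linarith
  have hq0 : 0 ≤ q := pow_nonneg ht0 n
  have hq1 : q ≤ 1 := pow_le_one₀ ht0 ht1
  set s : ℝ := 1 - p with hs
  have hs0 : 0 ≤ s := by simp [hs]; linarith
  have hs1 : s ≤ 1 := by simp [hs]; linarith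
  have he : (2.7 : ℝ) < Real.exp 1 := by
    have := Real.exp_one_gt_d9; linarith
  have hes : 0 < Real.exp 1 - s := by linarith
  -- part (i)
  have part1 : (∑ i ∈ Finset.range (lam + 1),
      (lam.choose i : ℝ) * q ^ i * (1 - q) ^ (lam - i) * p ^ (i + 1))
      = p * (1 - q * s) ^ lam := by
    have hqs : 1 - q * s = q * p + (1 - q) := by rw [hs]; ring
    rw [hqs, add_pow, Finset.mul_sum]
    apply Finset.sum_congr rfl
    intro i _
    rw [mul_pow]
    ring
  -- per-factor bound
  set A : ℝ := (Real.exp 1 - s) / Real.exp 1 with hA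
  set B : ℝ := s / ((n : ℝ) * (Real.exp 1 - s)) with hB
  have hA0 : 0 ≤ A := by
    apply div_nonneg (le_of_lt hes) (le_of_lt (by linarith : (0:ℝ) < Real.exp 1))
  have hB0 : 0 ≤ B := by
    apply div_nonneg hs0
    positivity
  have hque : t ≤ Real.exp 1 * q := self_le_exp_mul_pow n hn
  have hfac : 1 - q * s ≤ A * (1 + B) := by
    have h1 : A * (1 + B) = 1 - s * t / Real.exp 1 := by
      rw [hA, hB, ht]
      field_simp
      ring
    have h2 : s * t / Real.exp 1 ≤ s * q := by
      rw [div_le_iff₀ (by linarith : (0:ℝ) < Real.exp 1)]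
      calc s * t ≤ s * (Real.exp 1 * q) := mul_le_mul_of_nonneg_left hque hs0
        _ = s * q * Real.exp 1 := by ring
    rw [h1]; linarith
  have hqs0 : 0 ≤ 1 - q * s := by
    nlinarith
  have part2 : (1 - q * s) ^ lam
      ≤ A ^ lam * Real.exp (((lam : ℝ) / n) * s / (Real.exp 1 - s)) := by
    calc (1 - q * s) ^ lam ≤ (A * (1 + B)) ^ lam := pow_le_pow_left₀ hqs0 hfac lam
      _ = A ^ lam * (1 + B) ^ lam := mul_pow _ _ _
      _ ≤ A ^ lam * (Real.exp B) ^ lam := by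
          apply mul_le_mul_of_nonneg_left _ (pow_nonneg hA0 lam)
          apply pow_le_pow_left₀ (by linarith) _ lam
          have := Real.add_one_le_exp B; linarith
      _ = A ^ lam * Real.exp (((lam : ℝ) / n) * s / (Real.exp 1 - s)) := by
          rw [← Real.exp_nat_mul]
          congr 1
          rw [hB]
          field_simp
  refine ⟨part1, part2, ?_⟩
  exact mul_le_mul_of_nonneg_left part2 hp0
end
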